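/- arXiv:1412.0953 — 3 statements merged into one kernel-verified Lean document; each statement's English description precedes it below -/
import Mathlib

section
/- Let A be a commutative ring and suppose there exist units λ₁,…,λₙ ∈ A^× and elements b₁,…,bₙ ∈ A such that Σᵢ bᵢ(λᵢ² − 1) = 1 in A. Then the subgroup E₂(A) of SL₂(A) generated by all elementary matrices E₁₂(x) and E₂₁(y) (x, y ∈ A) is a perfect group, i.e. E₂(A) equals its own commutator subgroup. In particular this holds if there exists a unit λ ∈ A^× with λ² − 1 ∈ A^×. -/
open Matrix

/-- The elementary matrix `E₁₂(x) = (1, x; 0, 1)` in `SL₂(A)`. -/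
def E12 {A : Type*} [CommRing A] (x : A) : Matrix.SpecialLinearGroup (Fin 2) A :=
  ⟨!![1, x; 0, 1], by simp [Matrix.det_fin_two_of]⟩

/-- The elementary matrix `E₂₁(y) = (1, 0; y, 1)` in `SL₂(A)`. -/
def E21 {A : Type*} [CommRing A] (y : A) : Matrix.SpecialLinearGroup (Fin 2) A :=
  ⟨!![1, 0; y, 1], by simp [Matrix.det_fin_two_of]⟩

/-- `E₂(A)`, the subgroup of `SL₂(A)` generated by the elementary matrices. -/
def E2 (A : Type*) [CommRing A] : Subgroup (Matrix.SpecialLinearGroup (Fin 2) A) :=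
  Subgroup.closure ({g | ∃ x : A, g = E12 x} ∪ {g | ∃ y : A, g = E21 y})

section Aux

open scoped commutatorElement

variable {A : Type*} [CommRing A]

/-- The diagonal matrix `diag(u, u⁻¹)` in `SL₂(A)`. -/
def Dm (u : Aˣ) : Matrix.SpecialLinearGroup (Fin 2) A :=
  ⟨!![(u : A), 0; 0, ((u⁻¹ : Aˣ) : A)], by simp [Matrix.det_fin_two_of]⟩

lemma E12_mul (x y : A) : E12 x * E12 y = E12 (x + y) := by
  apply Subtype.ext
  simp only [Matrix.SpecialLinearGroup.coe_mul]
  simp only [E12, Matrix.SpecialLinearGroup.coe_mul, Matrix.mul_fin_two]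
  ext i j
  fin_cases i <;> fin_cases j <;> simp <;> ring

lemma E21_mul (x y : A) : E21 x * E21 y = E21 (x + y) := by
  apply Subtype.ext
  simp only [Matrix.SpecialLinearGroup.coe_mul]
  simp only [E21, Matrix.SpecialLinearGroup.coe_mul, Matrix.mul_fin_two]
  ext i j
  fin_cases i <;> fin_cases j <;> simp <;> ring

lemma E12_zero : (E12 (0 : A)) = 1 := by
  apply Subtype.ext
  simp [E12, Matrix.SpecialLinearGroup.coe_one, Matrix.one_fin_two]

lemma E21_zero : (E21 (0 : A)) = 1 := by
  apply Subtype.ext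
  simp [E21, Matrix.SpecialLinearGroup.coe_one, Matrix.one_fin_two]

lemma E12_inv (x : A) : (E12 x)⁻¹ = E12 (-x) := by
  apply inv_eq_of_mul_eq_one_right
  rw [E12_mul]; simp [E12_zero]

lemma E21_inv (x : A) : (E21 x)⁻¹ = E21 (-x) := by
  apply inv_eq_of_mul_eq_one_right
  rw [E21_mul]; simp [E21_zero]

lemma Dm_inv (u : Aˣ) : (Dm u)⁻¹ = Dm u⁻¹ := by
  apply inv_eq_of_mul_eq_one_right
  apply Subtype.ext
  simp only [Matrix.SpecialLinearGroup.coe_mul]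
  simp [Dm, Matrix.SpecialLinearGroup.coe_mul, Matrix.mul_fin_two,
    Matrix.SpecialLinearGroup.coe_one, Matrix.one_fin_two]

lemma E12_mem (x : A) : E12 x ∈ E2 A :=
  Subgroup.subset_closure (Or.inl ⟨x, rfl⟩)

lemma E21_mem (y : A) : E21 y ∈ E2 A :=
  Subgroup.subset_closure (Or.inr ⟨y, rfl⟩)

lemma Dm_eq (u : Aˣ) :
    Dm u = E12 (u : A) * E21 (-((u⁻¹ : Aˣ) : A)) * E12 (u : A) *
      E12 (-1) * E21 1 * E12 (-1) := by
  apply Subtype.ext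
  simp only [Matrix.SpecialLinearGroup.coe_mul]
  have h1 : (u : A) * ((u⁻¹ : Aˣ) : A) = 1 := u.mul_inv
  have h2 : ((u⁻¹ : Aˣ) : A) * (u : A) = 1 := u.inv_mul
  simp only [Dm, E12, E21, Matrix.SpecialLinearGroup.coe_mul, Matrix.mul_fin_two]
  ext i j
  fin_cases i <;> fin_cases j <;> simp <;>
    first
      | ring1
      | linear_combination h1
      | linear_combination -h1
      | linear_combination (u : A) * h1
      | linear_combination (-(u : A)) * h1
      | linear_combination ((u⁻¹ : Aˣ) : A) * h1
      | linear_combination (-((u⁻¹ : Aˣ) : A)) * h1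

lemma Dm_mem (u : Aˣ) : Dm u ∈ E2 A := by
  rw [Dm_eq]
  exact mul_mem (mul_mem (mul_mem (mul_mem (mul_mem (E12_mem _) (E21_mem _))
    (E12_mem _)) (E12_mem _)) (E21_mem _)) (E12_mem _)

lemma comm12 (u : Aˣ) (x : A) :
    ⁅Dm u, E12 x⁆ = E12 (((u : A) ^ 2 - 1) * x) := by
  rw [commutatorElement_def, Dm_inv, E12_inv]
  apply Subtype.ext
  simp only [Matrix.SpecialLinearGroup.coe_mul]
  have h1 : (u : A) * ((u⁻¹ : Aˣ) : A) = 1 := u.mul_inv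
  simp only [Dm, E12, Matrix.SpecialLinearGroup.coe_mul, Matrix.mul_fin_two]
  ext i j
  fin_cases i <;> fin_cases j <;> simp <;>
    first
      | ring1
      | linear_combination h1
      | linear_combination -h1
      | linear_combination x * h1
      | linear_combination (-x) * h1

lemma comm21 (u : Aˣ) (y : A) :
    ⁅Dm u, E21 y⁆ = E21 ((((u⁻¹ : Aˣ) : A) ^ 2 - 1) * y) := by
  rw [commutatorElement_def, Dm_inv, E21_inv]
  apply Subtype.ext
  simp only [Matrix.SpecialLinearGroup.coe_mul]
  have h1 : (u : A) * ((u⁻¹ : Aˣ) : A) = 1 := u.mul_inv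
  simp only [Dm, E21, Matrix.SpecialLinearGroup.coe_mul, Matrix.mul_fin_two]
  ext i j
  fin_cases i <;> fin_cases j <;> simp <;>
    first
      | ring1
      | linear_combination h1
      | linear_combination -h1
      | linear_combination y * h1
      | linear_combination (-y) * h1

lemma E12_sum_mem {ι : Type*} (s : Finset ι) (l : ι → Aˣ) (c : ι → A) :
    E12 (∑ i ∈ s, ((l i : A) ^ 2 - 1) * c i) ∈ ⁅E2 A, E2 A⁆ := by
  induction s using Finset.cons_induction with
  | empty => rw [Finset.sum_empty, E12_zero]; exact one_mem _
  | cons a s ha ih =>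
    rw [Finset.sum_cons, ← E12_mul]
    exact mul_mem (by
      rw [← comm12]
      exact Subgroup.commutator_mem_commutator (Dm_mem _) (E12_mem _)) ih

lemma E21_sum_mem {ι : Type*} (s : Finset ι) (l : ι → Aˣ) (c : ι → A) :
    E21 (∑ i ∈ s, ((((l i)⁻¹ : Aˣ) : A) ^ 2 - 1) * c i) ∈ ⁅E2 A, E2 A⁆ := by
  induction s using Finset.cons_induction with
  | empty => rw [Finset.sum_empty, E21_zero]; exact one_mem _
  | cons a s ha ih =>
    rw [Finset.sum_cons, ← E21_mul]
    exact mul_mem (by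
      rw [← comm21]
      exact Subgroup.commutator_mem_commutator (Dm_mem _) (E21_mem _)) ih

end Aux

/-- If there are units `λ₁, …, λₙ` and elements `b₁, …, bₙ` of a commutative ring `A` with
`Σᵢ bᵢ (λᵢ² - 1) = 1`, then `E₂(A)` is a perfect group. -/
theorem stmt0 (A : Type*) [CommRing A] (n : ℕ) (lam : Fin n → Aˣ) (b : Fin n → A)
    (h : ∑ i, b i * ((lam i : A) ^ 2 - 1) = 1) :
    commutator ↥(E2 A) = ⊤ := by
  have hmap : Subgroup.map (E2 A).subtype (commutator ↥(E2 A)) = ⁅E2 A, E2 A⁆ := by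
    rw [commutator_def, Subgroup.map_commutator]
    congr 1 <;> rw [← MonoidHom.range_eq_map, Subgroup.range_subtype]
  have hle : E2 A ≤ ⁅E2 A, E2 A⁆ := by
    rw [E2]
    apply (Subgroup.closure_le _).mpr
    rintro g (⟨x, rfl⟩ | ⟨y, rfl⟩)
    · have hx : (∑ i, ((lam i : A) ^ 2 - 1) * (b i * x)) = x := by
        calc ∑ i, ((lam i : A) ^ 2 - 1) * (b i * x)
            = ∑ i, (b i * ((lam i : A) ^ 2 - 1)) * x :=
              Finset.sum_congr rfl fun i _ => by ring
          _ = (∑ i, b i * ((lam i : A) ^ 2 - 1)) * x := (Finset.sum_mul _ _ _).symm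
          _ = x := by rw [h, one_mul]
      have := E12_sum_mem Finset.univ lam fun i => b i * x
      rwa [hx] at this
    · have hy : (∑ i, ((((lam i)⁻¹ : Aˣ) : A) ^ 2 - 1) *
          (-((lam i : A) ^ 2) * (b i * y))) = y := by
        calc ∑ i, ((((lam i)⁻¹ : Aˣ) : A) ^ 2 - 1) * (-((lam i : A) ^ 2) * (b i * y))
            = ∑ i, (b i * ((lam i : A) ^ 2 - 1)) * y := by
              refine Finset.sum_congr rfl fun i _ => ?_
              have hi : (((lam i)⁻¹ : Aˣ) : A) * (lam i : A) = 1 := (lam i).inv_mul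
              linear_combination
                (-((((lam i)⁻¹ : Aˣ) : A) * (lam i : A) + 1) * (b i * y)) * hi
          _ = (∑ i, b i * ((lam i : A) ^ 2 - 1)) * y := (Finset.sum_mul _ _ _).symm
          _ = y := by rw [h, one_mul]
      have := E21_sum_mem Finset.univ lam fun i => -((lam i : A) ^ 2) * (b i * y)
      rwa [hy] at this
  have h2 : ⁅E2 A, E2 A⁆ ≤ E2 A := by
    rw [← hmap]
    exact Subgroup.map_subtype_le _
  have heq : ⁅E2 A, E2 A⁆ = E2 A := le_antisymm h2 hle
  have hfin : Subgroup.map (E2 A).subtype (commutator ↥(E2 A))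
      = Subgroup.map (E2 A).subtype ⊤ := by
    rw [hmap, heq, ← MonoidHom.range_eq_map, Subgroup.range_subtype]
  exact Subgroup.map_injective (E2 A).subtype_injective hfin
end

section
/- Let A be a Dedekind domain with fraction field K and let I be a nonzero fractional ideal of A whose class in the ideal class group of A is a square, i.e. I = u·J² for some u ∈ K^× and some nonzero fractional ideal J. Then the group H(I) is isomorphic to SL₂(A); indeed H(I) is conjugate to SL₂(A) inside GL₂(K). -/
open Matrix

/-- For a fractional ideal `I` of a Dedekind domain `A` with fraction field `K`, `HSet A K I`
is the set of matrices `(a, b; c, d) ∈ SL₂(K)` with `a, d ∈ A`, `b ∈ I⁻¹` and `c ∈ I`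
(the stabilizer `H(I)` of the lattice `A ⊕ I`). -/
def HSet (A K : Type*) [CommRing A] [IsDomain A] [IsDedekindDomain A] [Field K] [Algebra A K]
    [IsFractionRing A K] (I : FractionalIdeal (nonZeroDivisors A) K) :
    Set (Matrix (Fin 2) (Fin 2) K) :=
  {g | g.det = 1 ∧ g 0 0 ∈ (algebraMap A K).range ∧ g 1 1 ∈ (algebraMap A K).range ∧
    g 0 1 ∈ I⁻¹ ∧ g 1 0 ∈ I}

/-- `SL₂(A)` viewed as a set of matrices over `K`. -/
def SLA (A K : Type*) [CommRing A] [Field K] [Algebra A K] : Set (Matrix (Fin 2) (Fin 2) K) :=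
  {g | g.det = 1 ∧ ∀ i j, g i j ∈ (algebraMap A K).range}


open FractionalIdeal

open UniqueFactorizationMonoid in
theorem oneHalfGen {A : Type*} [CommRing A] [IsDomain A] [IsDedekindDomain A]
    (I : Ideal A) (a : A) (ha : a ≠ 0) (haI : a ∈ I) :
    ∃ b ∈ I, I = Ideal.span {a} ⊔ Ideal.span {b} := by
  classical
  have hI0 : I ≠ ⊥ := fun h => ha (by simpa [h] using haI)
  have ha0 : (Ideal.span {a} : Ideal A) ≠ ⊥ := by
    simpa [Ideal.span_singleton_eq_bot] using ha
  set s : Finset (Ideal A) := (normalizedFactors (Ideal.span {a} : Ideal A)).toFinset with hs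
  have hprime : ∀ P ∈ s, Prime (id P : Ideal A) := fun P hP =>
    prime_of_normalized_factor P (Multiset.mem_toFinset.mp hP)
  have hxex : ∀ P ∈ s, ∃ x, x ∈ P ^ ((normalizedFactors I).count P) ∧ x ∉ P ^ ((normalizedFactors I).count P + 1) := by
    intro P hP
    have hPp : Prime (P : Ideal A) := hprime P hP
    exact Ideal.exists_mem_pow_notMem_pow_succ P hPp.ne_zero
      (fun h => hPp.not_unit (by simp [h, Ideal.isUnit_iff])) ((normalizedFactors I).count P)
  choose x hx1 hx2 using hxex
  obtain ⟨b, hb⟩ := IsDedekindDomain.exists_forall_sub_mem_ideal (s := s) id (fun P => (normalizedFactors I).count P + 1)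
    hprime (fun i _ j _ hij => hij) (fun P => x P.1 P.2)
  have hbmem : ∀ P, ∀ hP : P ∈ s, b ∈ P ^ (normalizedFactors I).count P := by
    intro P hP
    have h1 := hb P hP
    have h2 : b - x P hP ∈ P ^ (normalizedFactors I).count P := Ideal.pow_le_pow_right (Nat.le_succ _) h1
    simpa using add_mem h2 (hx1 P hP)
  have hbnot : ∀ P, ∀ hP : P ∈ s, b ∉ P ^ ((normalizedFactors I).count P + 1) := by
    intro P hP hmem
    exact hx2 P hP (by simpa using sub_mem hmem (hb P hP))
  have hsub : (normalizedFactors I).toFinset ⊆ s := by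
    intro P hP
    rw [Multiset.mem_toFinset] at hP
    rw [Ideal.mem_normalizedFactors_iff hI0] at hP
    rw [hs, Multiset.mem_toFinset, Ideal.mem_normalizedFactors_iff ha0]
    exact ⟨hP.1, le_trans ((Ideal.span_singleton_le_iff_mem _).mpr haI) hP.2⟩
  have hIprod : I = ∏ P ∈ s, P ^ (normalizedFactors I).count P := by
    have h1 : (normalizedFactors I).prod = I := associated_iff_eq.mp (prod_normalizedFactors hI0)
    have h2 : ∏ P ∈ (normalizedFactors I).toFinset, P ^ (normalizedFactors I).count P
        = (normalizedFactors I).prod := by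
      conv_rhs => rw [← Multiset.map_id' (normalizedFactors I)]
      exact (Finset.prod_multiset_map_count _ _).symm
    have h3 : ∏ P ∈ (normalizedFactors I).toFinset, P ^ (normalizedFactors I).count P
        = ∏ P ∈ s, P ^ (normalizedFactors I).count P := by
      refine Finset.prod_subset hsub ?_
      intro P _ hPn
      have h0 : (normalizedFactors I).count P = 0 :=
        Multiset.count_eq_zero_of_notMem (fun h => hPn (Multiset.mem_toFinset.mpr h))
      rw [h0, pow_zero]
    rw [← h3, h2, h1]
  have hbI : b ∈ I := by
    have hle : Ideal.span {b} ≤ s.inf fun P => P ^ (normalizedFactors I).count P :=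
      Finset.le_inf fun P hP => (Ideal.span_singleton_le_iff_mem _).mpr (hbmem P hP)
    have heq := IsDedekindDomain.inf_prime_pow_eq_prod s id (fun P => (normalizedFactors I).count P) hprime (fun i _ j _ h => h)
    simp only [id_eq] at heq
    rw [heq] at hle
    exact (Ideal.span_singleton_le_iff_mem _).mp (by rwa [← hIprod] at hle)
  refine ⟨b, hbI, ?_⟩
  set Jb := Ideal.span {a} ⊔ Ideal.span {b} with hJbdef
  have hle : Jb ≤ I := sup_le ((Ideal.span_singleton_le_iff_mem _).mpr haI)
    ((Ideal.span_singleton_le_iff_mem _).mpr hbI)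
  obtain ⟨E, hE⟩ : I ∣ Jb := Ideal.dvd_iff_le.mpr hle
  rcases eq_or_ne E ⊤ with rfl | hEtop
  · rw [hE, Ideal.mul_top]
  obtain ⟨M, hMmax, hME⟩ := Ideal.exists_le_maximal E hEtop
  exfalso
  have hJbM : Jb ≤ I * M := hE ▸ Ideal.mul_mono le_rfl hME
  have haJb : a ∈ Jb := Ideal.mem_sup_left (Ideal.mem_span_singleton_self a)
  have hM0 : M ≠ ⊥ := by
    rintro rfl
    have : a ∈ (⊥ : Ideal A) := by simpa [Ideal.mul_bot] using hJbM haJb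
    exact ha (by simpa using this)
  obtain ⟨C, hC⟩ : I ∣ Ideal.span {a} := Ideal.dvd_span_singleton.mpr haI
  have hMC : M ∣ C := by
    have h1 : I * M ∣ Ideal.span {a} :=
      Ideal.dvd_iff_le.mpr (le_trans le_sup_left hJbM)
    rw [hC] at h1
    have hI0' : I ≠ 0 := hI0
    exact (mul_dvd_mul_iff_left hI0').mp h1
  have hMa : M ∣ Ideal.span {a} := hC ▸ (Dvd.dvd.mul_left hMC I)
  have hMs : M ∈ s := by
    rw [hs, Multiset.mem_toFinset, Ideal.mem_normalizedFactors_iff ha0]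
    exact ⟨hMmax.isPrime, Ideal.le_of_dvd hMa⟩
  have hpow : I ≤ M ^ (normalizedFactors I).count M := by
    have h1 : Multiset.replicate ((normalizedFactors I).count M) M ≤ normalizedFactors I :=
      Multiset.le_count_iff_replicate_le.mp le_rfl
    have h2 : M ^ (normalizedFactors I).count M ∣ (normalizedFactors I).prod := by
      simpa [Multiset.prod_replicate] using Multiset.prod_dvd_prod_of_le h1
    rw [associated_iff_eq.mp (prod_normalizedFactors hI0)] at h2
    exact Ideal.le_of_dvd h2
  have hbM : b ∈ M ^ ((normalizedFactors I).count M + 1) := by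
    have h3 : Jb ≤ M ^ ((normalizedFactors I).count M + 1) := by
      refine le_trans hJbM ?_
      rw [pow_succ]
      exact Ideal.mul_mono hpow le_rfl
    exact h3 (Ideal.mem_sup_right (Ideal.mem_span_singleton_self b))
  exact hbnot M hMs hbM

/-- two-term realization of the generator of P * Q. -/
theorem twoTerm {A K : Type*} [CommRing A] [IsDomain A] [IsDedekindDomain A] [Field K]
    [Algebra A K] [IsFractionRing A K] (P Q : FractionalIdeal (nonZeroDivisors A) K)
    (hP : P ≠ 0) (hQ : Q ≠ 0) (u : K) (hu : u ≠ 0)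
    (hPQ : P * Q = spanSingleton (nonZeroDivisors A) u) :
    ∃ p₁ p₂ q₁ q₂ : K, p₁ ∈ P ∧ p₂ ∈ P ∧ q₁ ∈ Q ∧ q₂ ∈ Q ∧ p₁ * q₁ + p₂ * q₂ = u := by
  -- find a nonzero element of P
  have hex : ∃ p₁ ∈ P, p₁ ≠ (0 : K) := by
    by_contra hc
    push_neg at hc
    exact hP (eq_zero_iff.mpr hc)
  obtain ⟨p₁, hp₁P, hp₁⟩ := hex
  obtain ⟨d, I₀, hd, hPI₀⟩ := exists_eq_spanSingleton_mul P
  have hdK : algebraMap A K d ≠ 0 := fun h => hd (IsFractionRing.to_map_eq_zero_iff.mp h)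
  -- a₀ := d * p₁ ∈ I₀
  have hmem : algebraMap A K d * p₁ ∈ (I₀ : FractionalIdeal (nonZeroDivisors A) K) := by
    have h1 : algebraMap A K d * p₁ ∈ spanSingleton (nonZeroDivisors A) (algebraMap A K d) * P :=
      mul_mem_mul (mem_spanSingleton_self _ _) hp₁P
    have h2 : spanSingleton (nonZeroDivisors A) (algebraMap A K d) * P
        = (I₀ : FractionalIdeal (nonZeroDivisors A) K) := by
      rw [hPI₀, ← mul_assoc, spanSingleton_mul_spanSingleton, mul_inv_cancel₀ hdK,
        spanSingleton_one, one_mul]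
    rwa [h2] at h1
  obtain ⟨a₀, ha₀I, ha₀⟩ := (mem_coeIdeal _).mp hmem
  have ha₀0 : a₀ ≠ 0 := by
    rintro rfl
    rw [_root_.map_zero] at ha₀
    exact mul_ne_zero hdK hp₁ ha₀.symm
  obtain ⟨b, hbI, hI₀⟩ := oneHalfGen I₀ a₀ ha₀0 ha₀I
  set p₂ : K := (algebraMap A K d)⁻¹ * algebraMap A K b with hp₂def
  -- P = span p₁ + span p₂
  have hPsum : P = spanSingleton (nonZeroDivisors A) p₁ + spanSingleton (nonZeroDivisors A) p₂ := by
    rw [hPI₀, hI₀, coeIdeal_sup, coeIdeal_span_singleton, coeIdeal_span_singleton, mul_add,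
      spanSingleton_mul_spanSingleton, spanSingleton_mul_spanSingleton]
    congr 2
    rw [ha₀, ← mul_assoc, inv_mul_cancel₀ hdK, one_mul]
  have hp₂P : p₂ ∈ P := by
    rw [hPsum, ← sup_eq_add]
    exact (le_sup_right : spanSingleton (nonZeroDivisors A) p₂ ≤ _) (mem_spanSingleton_self _ _)
  -- u ∈ span p₁ * Q + span p₂ * Q
  have humem : u ∈ spanSingleton (nonZeroDivisors A) p₁ * Q + spanSingleton (nonZeroDivisors A) p₂ * Q := by
    rw [← add_mul, ← hPsum, hPQ]
    exact mem_spanSingleton_self _ _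
  rw [← sup_eq_add] at humem
  rw [← mem_coe, coe_sup] at humem
  obtain ⟨y, hy, z, hz, hyz⟩ := Submodule.mem_sup.mp humem
  rw [mem_coe] at hy hz
  obtain ⟨q₁, hq₁, hy1⟩ := mem_singleton_mul.mp hy
  obtain ⟨q₂, hq₂, hz1⟩ := mem_singleton_mul.mp hz
  exact ⟨p₁, p₂, q₁, q₂, hp₁P, hp₂P, hq₁, hq₂, by rw [← hy1, ← hz1]; exact hyz⟩

theorem entry3_mem {A K : Type*} [CommRing A] [Field K] [Algebra A K]
    {X Y Z : Matrix (Fin 2) (Fin 2) K}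
    {E1 E2 E3 E : Matrix (Fin 2) (Fin 2) (FractionalIdeal (nonZeroDivisors A) K)}
    (hX : ∀ i j, X i j ∈ E1 i j) (hY : ∀ i j, Y i j ∈ E2 i j) (hZ : ∀ i j, Z i j ∈ E3 i j)
    (hE : ∀ i j k l, E1 i k * E2 k l * E3 l j ≤ E i j) (i j : Fin 2) :
    (X * Y * Z) i j ∈ E i j := by
  rw [Matrix.mul_apply, ← FractionalIdeal.mem_coe]
  refine Submodule.sum_mem _ fun l _ => ?_
  rw [Matrix.mul_apply, Finset.sum_mul]
  refine Submodule.sum_mem _ fun k _ => ?_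
  rw [FractionalIdeal.mem_coe]
  exact hE i j k l (mul_mem_mul (mul_mem_mul (hX i k) (hY k l)) (hZ l j))


set_option maxHeartbeats 1600000 in
/-- If the class of a nonzero fractional ideal `I` of a Dedekind domain `A` is a square in the
class group, i.e. `I = u·J²` for some `u ∈ K^×` and some nonzero fractional ideal `J`, then
`H(I)` is conjugate to `SL₂(A)` inside `GL₂(K)` (in particular `H(I) ≅ SL₂(A)`). -/
theorem stmt3 (A K : Type*) [CommRing A] [IsDomain A] [IsDedekindDomain A] [Field K] [Algebra A K]
    [IsFractionRing A K] (I : FractionalIdeal (nonZeroDivisors A) K) (hI : I ≠ 0)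
    (hsq : ∃ (u : K) (J : FractionalIdeal (nonZeroDivisors A) K), u ≠ 0 ∧ J ≠ 0 ∧
      I = FractionalIdeal.spanSingleton (nonZeroDivisors A) u * J ^ 2) :
    ∃ M : GL (Fin 2) K,
      HSet A K I = (fun g => (↑(M⁻¹) : Matrix (Fin 2) (Fin 2) K) * g * (↑M : Matrix (Fin 2) (Fin 2) K)) '' SLA A K := by
  classical
  obtain ⟨u, J, hu, hJ, hIJ⟩ := hsq
  set P : FractionalIdeal (nonZeroDivisors A) K := J⁻¹ with hPdef
  set Q : FractionalIdeal (nonZeroDivisors A) K := spanSingleton (nonZeroDivisors A) u * J with hQdef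
  have hsu : spanSingleton (nonZeroDivisors A) u ≠ 0 := by
    rw [ne_eq, spanSingleton_eq_zero_iff]; exact hu
  have hP0 : P ≠ 0 := inv_ne_zero hJ
  have hQ0 : Q ≠ 0 := mul_ne_zero hsu hJ
  have hPQ : P * Q = spanSingleton (nonZeroDivisors A) u := by
    rw [hPdef, hQdef, mul_comm (spanSingleton (nonZeroDivisors A) u) J, ← mul_assoc,
      inv_mul_cancel₀ hJ, one_mul]
  obtain ⟨p₁, p₂, q₁, q₂, hp₁, hp₂, hq₁, hq₂, hdet⟩ := twoTerm P Q hP0 hQ0 u hu hPQ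
  -- the matrices
  set M₀ : Matrix (Fin 2) (Fin 2) K := !![p₁, p₂; -q₂, q₁] with hM₀
  set N : Matrix (Fin 2) (Fin 2) K := !![u⁻¹ * q₁, -(u⁻¹ * p₂); u⁻¹ * q₂, u⁻¹ * p₁] with hN
  have hMN : M₀ * N = 1 := by
    ext i j
    fin_cases i <;> fin_cases j <;>
      simp [hM₀, hN, Matrix.mul_apply, Fin.sum_univ_two] <;>
      field_simp <;>
      first
        | linear_combination hdet
        | linear_combination -hdet
        | linear_combination u * hdet
        | linear_combination -(u * hdet)
        | ring
  have hNM : N * M₀ = 1 := by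
    ext i j
    fin_cases i <;> fin_cases j <;>
      simp [hM₀, hN, Matrix.mul_apply, Fin.sum_univ_two] <;>
      field_simp <;>
      first
        | linear_combination hdet
        | linear_combination -hdet
        | linear_combination u * hdet
        | linear_combination -(u * hdet)
        | ring
  -- the GL element
  set Munit : GL (Fin 2) K := ⟨M₀, N, hMN, hNM⟩ with hMunitdef
  refine ⟨Munit⁻¹, ?_⟩
  have hcoe1 : (↑((Munit⁻¹)⁻¹) : Matrix (Fin 2) (Fin 2) K) = M₀ := by rw [inv_inv]
  have hcoe2 : (↑(Munit⁻¹) : Matrix (Fin 2) (Fin 2) K) = N := rfl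
  -- determinants
  have hdetM₀ : M₀.det = u := by
    rw [hM₀, Matrix.det_fin_two_of]
    linear_combination hdet
  have hdetprod : M₀.det * N.det = 1 := by rw [← Matrix.det_mul, hMN, Matrix.det_one]
  have hdetN : N.det = u⁻¹ := by
    rw [hdetM₀] at hdetprod
    field_simp
    linear_combination hdetprod
  -- ideal identities
  have hJJ : J⁻¹ * J = 1 := inv_mul_cancel₀ hJ
  have hss : spanSingleton (nonZeroDivisors A) u⁻¹ * spanSingleton (nonZeroDivisors A) u = 1 := by
    rw [spanSingleton_mul_spanSingleton, inv_mul_cancel₀ hu, spanSingleton_one]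
  have g1 : spanSingleton (nonZeroDivisors A) u⁻¹ * Q * P = 1 := by
    rw [hQdef, hPdef, ← mul_assoc, hss, one_mul, mul_inv_cancel₀ hJ]
  have g2 : spanSingleton (nonZeroDivisors A) u⁻¹ * Q * I⁻¹ * Q = 1 := by
    rw [hQdef, hIJ, mul_inv]
    have hre : spanSingleton (nonZeroDivisors A) u⁻¹ * (spanSingleton (nonZeroDivisors A) u * J) *
        ((spanSingleton (nonZeroDivisors A) u)⁻¹ * (J ^ 2)⁻¹) *
        (spanSingleton (nonZeroDivisors A) u * J)
        = (spanSingleton (nonZeroDivisors A) u⁻¹ * spanSingleton (nonZeroDivisors A) u) *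
          ((spanSingleton (nonZeroDivisors A) u) * (spanSingleton (nonZeroDivisors A) u)⁻¹) *
          (J ^ 2 * (J ^ 2)⁻¹) := by ring
    rw [hre, hss, mul_inv_cancel₀ hsu, mul_inv_cancel₀ (pow_ne_zero 2 hJ), one_mul, one_mul]
  have g3 : spanSingleton (nonZeroDivisors A) u⁻¹ * P * I * P = 1 := by
    rw [hPdef, hIJ]
    have hre : spanSingleton (nonZeroDivisors A) u⁻¹ * J⁻¹ *
        (spanSingleton (nonZeroDivisors A) u * J ^ 2) * J⁻¹
        = (spanSingleton (nonZeroDivisors A) u⁻¹ * spanSingleton (nonZeroDivisors A) u) *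
          ((J⁻¹ * J) * (J⁻¹ * J)) := by ring
    rw [hre, hss, hJJ]; simp
  have g4 : spanSingleton (nonZeroDivisors A) u⁻¹ * P * Q = 1 := by
    rw [hPdef, hQdef]
    have hre : spanSingleton (nonZeroDivisors A) u⁻¹ * J⁻¹ *
        (spanSingleton (nonZeroDivisors A) u * J)
        = (spanSingleton (nonZeroDivisors A) u⁻¹ * spanSingleton (nonZeroDivisors A) u) *
          (J⁻¹ * J) := by ring
    rw [hre, hss, hJJ, one_mul]
  have g5 : P * (spanSingleton (nonZeroDivisors A) u⁻¹ * Q) = 1 := by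
    rw [← mul_assoc, mul_comm P, mul_assoc, mul_comm P, ← mul_assoc, g1]
  have g6 : P * (spanSingleton (nonZeroDivisors A) u⁻¹ * P) = I⁻¹ := by
    rw [hPdef, hIJ, mul_inv, spanSingleton_inv, sq, mul_inv]
    ring
  have g7 : Q * (spanSingleton (nonZeroDivisors A) u⁻¹ * Q) = I := by
    rw [hQdef, hIJ]
    have hre : spanSingleton (nonZeroDivisors A) u * J *
        (spanSingleton (nonZeroDivisors A) u⁻¹ * (spanSingleton (nonZeroDivisors A) u * J))
        = (spanSingleton (nonZeroDivisors A) u⁻¹ * spanSingleton (nonZeroDivisors A) u) *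
          (spanSingleton (nonZeroDivisors A) u * J ^ 2) := by ring
    rw [hre, hss, one_mul]
  have g8 : Q * (spanSingleton (nonZeroDivisors A) u⁻¹ * P) = 1 := by
    rw [hPdef, hQdef]
    have hre : spanSingleton (nonZeroDivisors A) u * J *
        (spanSingleton (nonZeroDivisors A) u⁻¹ * J⁻¹)
        = (spanSingleton (nonZeroDivisors A) u⁻¹ * spanSingleton (nonZeroDivisors A) u) *
          (J * J⁻¹) := by ring
    rw [hre, hss, one_mul, mul_inv_cancel₀ hJ]
  -- memberships of the conjugating matrices
  have hnegq₂ : -q₂ ∈ Q := by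
    rw [← mem_coe]; exact Submodule.neg_mem _ (mem_coe.mpr hq₂)
  have hM₀mem : ∀ i j, M₀ i j ∈ (!![P, P; Q, Q] :
      Matrix (Fin 2) (Fin 2) (FractionalIdeal (nonZeroDivisors A) K)) i j := by
    intro i j
    fin_cases i <;> fin_cases j
    · simpa [hM₀] using hp₁
    · simpa [hM₀] using hp₂
    · simpa [hM₀] using hnegq₂
    · simpa [hM₀] using hq₁
  have huinv : (u⁻¹ : K) ∈ spanSingleton (nonZeroDivisors A) u⁻¹ :=
    mem_spanSingleton_self _ _
  have hNmem : ∀ i j, N i j ∈ (!![spanSingleton (nonZeroDivisors A) u⁻¹ * Q,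
      spanSingleton (nonZeroDivisors A) u⁻¹ * P;
      spanSingleton (nonZeroDivisors A) u⁻¹ * Q,
      spanSingleton (nonZeroDivisors A) u⁻¹ * P] :
      Matrix (Fin 2) (Fin 2) (FractionalIdeal (nonZeroDivisors A) K)) i j := by
    intro i j
    fin_cases i <;> fin_cases j
    · simpa [hN] using mul_mem_mul huinv hq₁
    · have : -(u⁻¹ * p₂) ∈ spanSingleton (nonZeroDivisors A) u⁻¹ * P := by
        rw [← mem_coe]
        exact Submodule.neg_mem _ (mem_coe.mpr (mul_mem_mul huinv hp₂))
      simpa [hN] using this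
    · simpa [hN] using mul_mem_mul huinv hq₂
    · simpa [hN] using mul_mem_mul huinv hp₁
  -- the set equality
  ext h
  simp only [Set.mem_image]
  constructor
  · rintro ⟨h1, h00, h11, h01, h10⟩
    have hHmem : ∀ i j, h i j ∈ (!![1, I⁻¹; I, 1] :
        Matrix (Fin 2) (Fin 2) (FractionalIdeal (nonZeroDivisors A) K)) i j := by
      intro i j
      fin_cases i <;> fin_cases j
      · obtain ⟨c, hc⟩ := h00
        simpa using (mem_one_iff (nonZeroDivisors A)).mpr ⟨c, hc⟩
      · simpa using h01
      · simpa using h10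
      · obtain ⟨c, hc⟩ := h11
        simpa using (mem_one_iff (nonZeroDivisors A)).mpr ⟨c, hc⟩
    have hcond : ∀ i j k l,
        (!![spanSingleton (nonZeroDivisors A) u⁻¹ * Q,
          spanSingleton (nonZeroDivisors A) u⁻¹ * P;
          spanSingleton (nonZeroDivisors A) u⁻¹ * Q,
          spanSingleton (nonZeroDivisors A) u⁻¹ * P] :
          Matrix (Fin 2) (Fin 2) (FractionalIdeal (nonZeroDivisors A) K)) i k *
        (!![1, I⁻¹; I, 1] : Matrix (Fin 2) (Fin 2) (FractionalIdeal (nonZeroDivisors A) K)) k l *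
        (!![P, P; Q, Q] : Matrix (Fin 2) (Fin 2) (FractionalIdeal (nonZeroDivisors A) K)) l j ≤
        (!![1, 1; 1, 1] : Matrix (Fin 2) (Fin 2) (FractionalIdeal (nonZeroDivisors A) K)) i j := by
      intro i j k l
      fin_cases i <;> fin_cases j <;> fin_cases k <;> fin_cases l <;>
        simp [g1, g2, g3, g4]
    refine ⟨N * h * M₀, ⟨?_, ?_⟩, ?_⟩
    · rw [Matrix.det_mul, Matrix.det_mul, h1, hdetN, hdetM₀]
      field_simp
    · intro i j
      have hmem := entry3_mem hNmem hHmem hM₀mem hcond i j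
      have hone : (N * h * M₀) i j ∈ (1 : FractionalIdeal (nonZeroDivisors A) K) := by
        fin_cases i <;> fin_cases j <;> simpa using hmem
      obtain ⟨c, hc⟩ := (mem_one_iff _).mp hone
      exact ⟨c, hc⟩
    · simp only [hcoe1, hcoe2]
      simp only [← Matrix.mul_assoc]
      rw [hMN, Matrix.one_mul, Matrix.mul_assoc, hMN, Matrix.mul_one]
  · rintro ⟨g, ⟨hg1, hg2⟩, rfl⟩
    simp only [hcoe1, hcoe2]
    have hgmem : ∀ i j, g i j ∈ (!![1, 1; 1, 1] :
        Matrix (Fin 2) (Fin 2) (FractionalIdeal (nonZeroDivisors A) K)) i j := by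
      intro i j
      obtain ⟨c, hc⟩ := hg2 i j
      fin_cases i <;> fin_cases j <;> simpa using (mem_one_iff (nonZeroDivisors A)).mpr ⟨c, hc⟩
    have hcond2 : ∀ i j k l,
        (!![P, P; Q, Q] : Matrix (Fin 2) (Fin 2) (FractionalIdeal (nonZeroDivisors A) K)) i k *
        (!![1, 1; 1, 1] : Matrix (Fin 2) (Fin 2) (FractionalIdeal (nonZeroDivisors A) K)) k l *
        (!![spanSingleton (nonZeroDivisors A) u⁻¹ * Q,
          spanSingleton (nonZeroDivisors A) u⁻¹ * P;
          spanSingleton (nonZeroDivisors A) u⁻¹ * Q,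
          spanSingleton (nonZeroDivisors A) u⁻¹ * P] :
          Matrix (Fin 2) (Fin 2) (FractionalIdeal (nonZeroDivisors A) K)) l j ≤
        (!![1, I⁻¹; I, 1] : Matrix (Fin 2) (Fin 2) (FractionalIdeal (nonZeroDivisors A) K)) i j := by
      intro i j k l
      fin_cases i <;> fin_cases j <;> fin_cases k <;> fin_cases l <;>
        simp [g5, g6, g7, g8]
    have hent := fun i j => entry3_mem hM₀mem hgmem hNmem hcond2 i j
    refine ⟨?_, ?_, ?_, ?_, ?_⟩
    · rw [Matrix.det_mul, Matrix.det_mul, hg1, hdetN, hdetM₀]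
      field_simp
    · obtain ⟨c, hc⟩ := (mem_one_iff (nonZeroDivisors A)).mp (by simpa using hent 0 0)
      exact ⟨c, hc⟩
    · obtain ⟨c, hc⟩ := (mem_one_iff (nonZeroDivisors A)).mp (by simpa using hent 1 1)
      exact ⟨c, hc⟩
    · simpa using hent 0 1
    · simpa using hent 1 0
end

section
/- Let A be a Dedekind domain and let I and J be nonzero comaximal ideals of A, i.e. I + J = A. Then the composite homomorphism Γ(I) → SL₂(A) → SL₂(A/J), restricting the reduction map modulo J to the principal congruence subgroup of level I, is surjective. -/
open Matrix

open UniqueFactorizationMonoid in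
lemma key_lemma {A : Type*} [CommRing A] [IsDomain A] [IsDedekindDomain A]
    (K : Ideal A) (hK : K ≠ ⊥) (c d : A) (h : Ideal.span {c, d} ⊔ K = ⊤) :
    ∃ c' d', c' - c ∈ K ∧ d' - d ∈ K ∧ ∃ x y, x * c' + y * d' = 1 := by
  classical
  obtain ⟨c', hc'K, hc'0⟩ : ∃ c', c' - c ∈ K ∧ c' ≠ 0 := by
    by_cases hc : c = 0
    · obtain ⟨z, hzK, hz0⟩ := Submodule.exists_mem_ne_zero_of_ne_bot hK
      exact ⟨z, by simpa [hc] using hzK, hz0⟩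
    · exact ⟨c, by simp, hc⟩
  have hspan : Ideal.span {c'} ≠ ⊥ := by
    simpa [Ideal.span_singleton_eq_bot] using hc'0
  set T : Finset (Ideal A) :=
    (normalizedFactors (Ideal.span {c'})).toFinset.filter (fun Q => ¬ K ≤ Q) with hT
  have hTmem : ∀ Q, Q ∈ T ↔ (Q.IsPrime ∧ Ideal.span {c'} ≤ Q) ∧ ¬ K ≤ Q := by
    intro Q
    rw [hT, Finset.mem_filter, Multiset.mem_toFinset, Ideal.mem_normalizedFactors_iff hspan]
  have hsup : K ⊔ (∏ Q ∈ T, Q) = ⊤ := by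
    apply Ideal.sup_prod_eq_top
    intro Q hQ
    obtain ⟨⟨hQp, hQc⟩, hQK⟩ := (hTmem Q).mp hQ
    have hQ0 : Q ≠ ⊥ := by
      intro hbot
      rw [hbot, le_bot_iff] at hQc
      exact hspan hQc
    have hQmax : Q.IsMaximal := Ideal.IsPrime.isMaximal hQp hQ0
    by_contra hne
    rw [sup_comm] at hne
    have hQeq : Q = Q ⊔ K := hQmax.eq_of_le hne le_sup_left
    exact hQK (hQeq ▸ le_sup_right)
  obtain ⟨u, huK, v, hvP, huv⟩ := Submodule.mem_sup.mp (hsup ▸ Submodule.mem_top :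
    (1 : A) ∈ K ⊔ (∏ Q ∈ T, Q))
  have hdK : d * v + u - d ∈ K := by
    have heq : d * v + u - d = (-d + 1) * u := by linear_combination d * huv
    rw [heq]
    exact Ideal.mul_mem_left _ _ huK
  refine ⟨c', d * v + u, hc'K, hdK, ?_⟩
  have htop : Ideal.span {c', d * v + u} = ⊤ := by
    by_contra hne
    obtain ⟨M, hMmax, hMle⟩ := Ideal.exists_le_maximal _ hne
    have hcM : c' ∈ M := hMle (Ideal.subset_span (by simp))
    have hdM : d * v + u ∈ M := hMle (Ideal.subset_span (by simp))
    by_cases hKM : K ≤ M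
    · have hc : c ∈ M := by simpa using M.sub_mem hcM (hKM hc'K)
      have hd : d ∈ M := by simpa using M.sub_mem hdM (hKM hdK)
      have : (⊤ : Ideal A) ≤ M := by
        rw [← h]
        refine sup_le ?_ hKM
        rw [Ideal.span_le]
        rintro z (hz | hz)
        · exact hz ▸ hc
        · simp only [Set.mem_singleton_iff] at hz; exact hz ▸ hd
      exact hMmax.ne_top (top_le_iff.mp this)
    · have hMT : M ∈ T := (hTmem M).mpr
        ⟨⟨hMmax.isPrime, by rwa [Ideal.span_le, Set.singleton_subset_iff]⟩, hKM⟩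
      have hPM : (∏ Q ∈ T, Q) ≤ M := Ideal.prod_le_inf.trans (Finset.inf_le hMT)
      have hd1 : d * v + u - 1 ∈ (∏ Q ∈ T, Q) := by
        have heq : d * v + u - 1 = (d - 1) * v := by linear_combination huv
        rw [heq]
        exact Ideal.mul_mem_left _ _ hvP
      have h1M : (1 : A) ∈ M := by simpa using M.sub_mem hdM (hPM hd1)
      exact hMmax.ne_top ((Ideal.eq_top_iff_one M).mpr h1M)
  exact Ideal.mem_span_pair.mp (htop ▸ Submodule.mem_top)

/-- The principal congruence subgroup `Γ(I)` of `SL₂(A)`: the kernel of reduction mod `I`. -/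
def Gamma (A : Type*) [CommRing A] (I : Ideal A) :
    Subgroup (Matrix.SpecialLinearGroup (Fin 2) A) :=
  (Matrix.SpecialLinearGroup.map (Ideal.Quotient.mk I)).ker

/-- if `I` and `J` are nonzero comaximal ideals of a Dedekind domain `A`, then the
composite `Γ(I) → SL₂(A) → SL₂(A/J)` is surjective. -/
theorem stmt6 (A : Type*) [CommRing A] [IsDomain A] [IsDedekindDomain A]
    (I J : Ideal A) (hI : I ≠ ⊥) (hJ : J ≠ ⊥) (hIJ : I ⊔ J = ⊤) :
    Function.Surjective
      ((Matrix.SpecialLinearGroup.map (n := Fin 2) (Ideal.Quotient.mk J)).comp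
        (Gamma A I).subtype) := by
  intro T
  -- lift entries of T
  obtain ⟨a, ha⟩ := Ideal.Quotient.mk_surjective (I := J) (T.1 0 0)
  obtain ⟨b, hb⟩ := Ideal.Quotient.mk_surjective (I := J) (T.1 0 1)
  obtain ⟨c, hc⟩ := Ideal.Quotient.mk_surjective (I := J) (T.1 1 0)
  obtain ⟨d, hd⟩ := Ideal.Quotient.mk_surjective (I := J) (T.1 1 1)
  have hdetT : Ideal.Quotient.mk J a * Ideal.Quotient.mk J d
      - Ideal.Quotient.mk J b * Ideal.Quotient.mk J c = 1 := by
    rw [ha, hb, hc, hd]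
    have := T.2
    rw [Matrix.det_fin_two] at this
    exact this
  -- CRT elements
  obtain ⟨p, hpI, q, hqJ, hpq⟩ := Submodule.mem_sup.mp
    ((Ideal.eq_top_iff_one _).mp hIJ)
  set K : Ideal A := I ⊓ J with hKdef
  have hK : K ≠ ⊥ := by
    intro hbot
    rcases Ideal.mul_eq_bot.mp (le_bot_iff.mp ((Ideal.mul_le_inf).trans hbot.le)) with h | h
    · exact hI h
    · exact hJ h
  -- quotient facts
  have hpI0 : Ideal.Quotient.mk I p = 0 := Ideal.Quotient.eq_zero_iff_mem.mpr hpI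
  have hqJ0 : Ideal.Quotient.mk J q = 0 := Ideal.Quotient.eq_zero_iff_mem.mpr hqJ
  have hqI1 : Ideal.Quotient.mk I q = 1 := by
    have : q = 1 - p := by linear_combination hpq
    rw [this, _root_.map_sub, _root_.map_one, hpI0, sub_zero]
  have hpJ1 : Ideal.Quotient.mk J p = 1 := by
    have : p = 1 - q := by linear_combination hpq
    rw [this, _root_.map_sub, _root_.map_one, hqJ0, sub_zero]
  -- the CRT-combined entries
  set a₀ : A := q + a * p with ha₀
  set b₀ : A := b * p with hb₀
  set c₀ : A := c * p with hc₀
  set d₀ : A := q + d * p with hd₀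
  have hk₀ : a₀ * d₀ - b₀ * c₀ - 1 ∈ K := by
    rw [hKdef, Submodule.mem_inf]
    constructor
    · rw [← Ideal.Quotient.eq_zero_iff_mem]
      simp [ha₀, hb₀, hc₀, hd₀, _root_.map_sub, _root_.map_mul, _root_.map_add, hpI0, hqI1]
    · rw [← Ideal.Quotient.eq_zero_iff_mem]
      simp only [ha₀, hb₀, hc₀, hd₀, _root_.map_sub, _root_.map_mul, _root_.map_add, _root_.map_one, hqJ0, hpJ1]
      linear_combination hdetT
  have hsup : Ideal.span {c₀, d₀} ⊔ K = ⊤ := by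
    rw [Ideal.eq_top_iff_one]
    apply Submodule.mem_sup.mpr
    refine ⟨a₀ * d₀ - b₀ * c₀, ?_, -(a₀ * d₀ - b₀ * c₀ - 1), neg_mem hk₀, by ring⟩
    exact Ideal.mem_span_pair.mpr ⟨-b₀, a₀, by ring⟩
  obtain ⟨c', d', hc'K, hd'K, x, y, hxy⟩ := key_lemma K hK c₀ d₀ hsup
  set k' : A := a₀ * d' - b₀ * c' - 1 with hk'def
  have hk' : k' ∈ K := by
    have : k' = (a₀ * d₀ - b₀ * c₀ - 1) + a₀ * (d' - d₀) - b₀ * (c' - c₀) := by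
      rw [hk'def]; ring
    rw [this]
    exact sub_mem (add_mem hk₀ (Ideal.mul_mem_left _ _ hd'K)) (Ideal.mul_mem_left _ _ hc'K)
  set a₁ : A := a₀ - y * k' with ha₁
  set b₁ : A := b₀ + x * k' with hb₁
  have hdet1 : (!![a₁, b₁; c', d'] : Matrix (Fin 2) (Fin 2) A).det = 1 := by
    rw [Matrix.det_fin_two_of, ha₁, hb₁, hk'def]
    linear_combination (-(a₀ * d' - b₀ * c' - 1)) * hxy
  set N : Matrix.SpecialLinearGroup (Fin 2) A := ⟨!![a₁, b₁; c', d'], hdet1⟩ with hN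
  have hKI : K ≤ I := inf_le_left
  have hKJ : K ≤ J := inf_le_right
  have hk'I : Ideal.Quotient.mk I k' = 0 := Ideal.Quotient.eq_zero_iff_mem.mpr (hKI hk')
  have hk'J : Ideal.Quotient.mk J k' = 0 := Ideal.Quotient.eq_zero_iff_mem.mpr (hKJ hk')
  have hcI : Ideal.Quotient.mk I c' = 0 := by
    have : c' = c₀ + (c' - c₀) := by ring
    rw [this, _root_.map_add, Ideal.Quotient.eq_zero_iff_mem.mpr (hKI hc'K), add_zero, hc₀]
    simp [_root_.map_mul, hpI0]
  have hdI : Ideal.Quotient.mk I d' = 1 := by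
    have : d' = d₀ + (d' - d₀) := by ring
    rw [this, _root_.map_add, Ideal.Quotient.eq_zero_iff_mem.mpr (hKI hd'K), add_zero, hd₀]
    simp [_root_.map_add, _root_.map_mul, hpI0, hqI1]
  have haI : Ideal.Quotient.mk I a₁ = 1 := by
    rw [ha₁, _root_.map_sub, _root_.map_mul, hk'I, mul_zero, sub_zero, ha₀]
    simp [_root_.map_add, _root_.map_mul, hpI0, hqI1]
  have hbI : Ideal.Quotient.mk I b₁ = 0 := by
    rw [hb₁, _root_.map_add, _root_.map_mul, _root_.map_mul, hk'I, mul_zero, add_zero,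
      hpI0, mul_zero]
  have hcJ : Ideal.Quotient.mk J c' = T.1 1 0 := by
    have : c' = c₀ + (c' - c₀) := by ring
    rw [this, _root_.map_add, Ideal.Quotient.eq_zero_iff_mem.mpr (hKJ hc'K), add_zero, hc₀,
      _root_.map_mul, hpJ1, mul_one, hc]
  have hdJ : Ideal.Quotient.mk J d' = T.1 1 1 := by
    have : d' = d₀ + (d' - d₀) := by ring
    rw [this, _root_.map_add, Ideal.Quotient.eq_zero_iff_mem.mpr (hKJ hd'K), add_zero, hd₀,
      _root_.map_add, _root_.map_mul, hqJ0, hpJ1, mul_one, zero_add, hd]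
  have haJ : Ideal.Quotient.mk J a₁ = T.1 0 0 := by
    rw [ha₁, _root_.map_sub, _root_.map_mul, hk'J, mul_zero, sub_zero, ha₀,
      _root_.map_add, _root_.map_mul, hqJ0, hpJ1, mul_one, zero_add, ha]
  have hbJ : Ideal.Quotient.mk J b₁ = T.1 0 1 := by
    rw [hb₁, _root_.map_add, _root_.map_mul, _root_.map_mul, hk'J, mul_zero, add_zero,
      hpJ1, mul_one, hb]
  have hNGamma : N ∈ Gamma A I := by
    rw [Gamma, MonoidHom.mem_ker]
    apply Subtype.ext
    ext i j
    erw [Matrix.SpecialLinearGroup.map_apply_coe]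
    fin_cases i <;> fin_cases j <;>
      simp [hN, Matrix.SpecialLinearGroup.map, haI, hbI, hcI, hdI]
  refine ⟨⟨N, hNGamma⟩, ?_⟩
  apply Subtype.ext
  ext i j
  erw [Matrix.SpecialLinearGroup.map_apply_coe]
  fin_cases i <;> fin_cases j <;>
    simp [hN, Matrix.SpecialLinearGroup.map, haJ, hbJ, hcJ, hdJ]
end
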